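/- Let n, m be real numbers with n > m > 3 and let T > 0. Then the series Σ_{k=0}^∞ (1/k!) Γ((k·m - 3)/n) · T^{-(n-m)k/n} is summable (converges absolutely), where Γ is the Euler Gamma function. -/

import Mathlib

open Real Filter

lemma gamma_add_le {x d : ℝ} (hx : 0 < x) (hd0 : 0 ≤ d) (hd1 : d ≤ 1) :
    Real.Gamma (x + d) ≤ Real.Gamma x * x ^ d := by
  have hΓx : 0 < Real.Gamma x := Real.Gamma_pos_of_pos hx
  have hconv := Real.convexOn_log_Gamma.2 (Set.mem_Ioi.mpr hx)
    (Set.mem_Ioi.mpr (by linarith : (0:ℝ) < x + 1)) (by linarith : 0 ≤ 1 - d) hd0 (by ring)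
  have hcomb : (1 - d) • x + d • (x + 1) = x + d := by simp [smul_eq_mul]; ring
  rw [hcomb] at hconv
  have hΓ1 : Real.Gamma (x + 1) = x * Real.Gamma x := Real.Gamma_add_one hx.ne'
  have hlog : Real.log (Real.Gamma (x + d)) ≤ Real.log (Real.Gamma x) + d * Real.log x := by
    have := hconv
    simp only [Function.comp, smul_eq_mul] at this
    rw [hΓ1, Real.log_mul hx.ne' hΓx.ne'] at this
    nlinarith [this]
  have hΓxd : 0 < Real.Gamma (x + d) := Real.Gamma_pos_of_pos (by linarith)
  calc Real.Gamma (x + d) = Real.exp (Real.log (Real.Gamma (x + d))) := (Real.exp_log hΓxd).symm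
    _ ≤ Real.exp (Real.log (Real.Gamma x) + d * Real.log x) := Real.exp_le_exp.mpr hlog
    _ = Real.Gamma x * x ^ d := by
        rw [Real.exp_add, Real.exp_log hΓx, Real.rpow_def_of_pos hx, mul_comm d]

theorem second_virial_series_summable (n m T : ℝ)
    (hm : 3 < m) (hnm : m < n) (hT : 0 < T) :
    Summable (fun k : ℕ =>
      (1 / (k.factorial : ℝ)) * Real.Gamma (((k : ℝ) * m - 3) / n) *
        T ^ (-((n - m) * (k : ℝ) / n))) := by
  have hn : (0:ℝ) < n := by linarith
  have hm0 : (0:ℝ) < m := by linarith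
  have hd0 : 0 < m / n := div_pos hm0 hn
  have hd1 : m / n < 1 := (div_lt_one hn).mpr hnm
  have hbpos : 0 < T ^ (-((n - m) / n)) := Real.rpow_pos_of_pos hT _
  set d : ℝ := m / n with hd
  set b : ℝ := T ^ (-((n - m) / n)) with hb
  -- the majorant for the ratio tends to 0
  have htend : Tendsto (fun k : ℕ => b * (k : ℝ) ^ (d - 1)) atTop (nhds 0) := by
    have h1 : Tendsto (fun x : ℝ => x ^ (-(1 - d))) atTop (nhds 0) :=
      tendsto_rpow_neg_atTop (by linarith)
    have h2 := (h1.comp tendsto_natCast_atTop_atTop).const_mul b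
    have h3 : -(1 - d) = d - 1 := by ring
    simpa [Function.comp, h3] using h2
  have hev : ∀ᶠ k : ℕ in atTop, b * (k : ℝ) ^ (d - 1) ≤ 1 / 2 :=
    htend.eventually_le_const (by norm_num)
  apply summable_of_ratio_norm_eventually_le (r := 1/2) (by norm_num)
  filter_upwards [hev, eventually_ge_atTop 1] with k hk hk1
  have hkR : (1:ℝ) ≤ (k:ℝ) := by exact_mod_cast hk1
  have hkpos : (0:ℝ) < k := by linarith
  set x : ℝ := ((k : ℝ) * m - 3) / n with hx
  have hxpos : 0 < x := by
    apply div_pos _ hn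
    nlinarith
  have hΓx : 0 < Real.Gamma x := Real.Gamma_pos_of_pos hxpos
  have hΓ : Real.Gamma (x + d) ≤ Real.Gamma x * x ^ d := gamma_add_le hxpos hd0.le hd1.le
  have hxk : x ≤ (k : ℝ) := by
    rw [hx, div_le_iff₀ hn]
    nlinarith
  have hxd : x ^ d ≤ (k : ℝ) ^ d := Real.rpow_le_rpow hxpos.le hxk hd0.le
  have hkey : b * x ^ d ≤ ((k:ℝ) + 1) / 2 := by
    have hsplit : (k:ℝ) ^ d = (k:ℝ) ^ (d - 1) * (k:ℝ) := by
      rw [← Real.rpow_add_one hkpos.ne' (d-1)]; ring_nf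
    have h2 : b * (k:ℝ) ^ d ≤ (k:ℝ) / 2 := by
      rw [hsplit]
      calc b * ((k:ℝ) ^ (d - 1) * (k:ℝ)) = (b * (k:ℝ) ^ (d-1)) * (k:ℝ) := by ring
        _ ≤ (1/2) * (k:ℝ) := mul_le_mul_of_nonneg_right hk hkpos.le
        _ = (k:ℝ) / 2 := by ring
    calc b * x ^ d ≤ b * (k:ℝ) ^ d := mul_le_mul_of_nonneg_left hxd hbpos.le
      _ ≤ (k:ℝ)/2 := h2
      _ ≤ ((k:ℝ)+1)/2 := by linarith
  set Tk : ℝ := T ^ (-((n - m) * (k:ℝ) / n)) with hTk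
  have hTpos : 0 < Tk := Real.rpow_pos_of_pos hT _
  set F : ℝ := (k.factorial : ℝ) with hF
  have hFpos : (0:ℝ) < F := by rw [hF]; positivity
  -- rewriting the (k+1)-th term
  have e1 : (((k+1 : ℕ)) : ℝ) * m - 3 = x * n + m := by
    push_cast
    field_simp [hx]
    rw [hx, div_mul_cancel₀ _ hn.ne']; ring
  have harg : ((((k+1 : ℕ)) : ℝ) * m - 3) / n = x + d := by
    rw [e1, hd]; field_simp
  have e2 : T ^ (-((n - m) * (((k+1:ℕ)) : ℝ) / n)) = Tk * b := by
    rw [hTk, hb, ← Real.rpow_add hT]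
    push_cast
    ring_nf
  have e3 : ((k+1).factorial : ℝ) = ((k:ℝ)+1) * F := by
    rw [hF]; push_cast [Nat.factorial_succ]; ring
  have hΓxd_pos : 0 < Real.Gamma (x + d) := Real.Gamma_pos_of_pos (by linarith)
  rw [Real.norm_eq_abs, Real.norm_eq_abs, harg, e2, e3]
  rw [abs_of_pos (by positivity), abs_of_pos (by positivity)]
  have h1 : Real.Gamma (x+d) * b ≤ Real.Gamma x * (((k:ℝ)+1)/2) := by
    calc Real.Gamma (x+d) * b ≤ (Real.Gamma x * x^d) * b :=
          mul_le_mul_of_nonneg_right hΓ hbpos.le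
      _ = Real.Gamma x * (b * x^d) := by ring
      _ ≤ Real.Gamma x * (((k:ℝ)+1)/2) := mul_le_mul_of_nonneg_left hkey hΓx.le
  have hk1pos : (0:ℝ) < (k:ℝ) + 1 := by linarith
  rw [show (1:ℝ) / (((k:ℝ)+1) * F) * Real.Gamma (x + d) * (Tk * b)
      = (Real.Gamma (x+d) * b * Tk) / (((k:ℝ)+1) * F) by ring,
    show (1:ℝ)/2 * (1 / F * Real.Gamma x * Tk)
      = (Real.Gamma x * (((k:ℝ)+1)/2) * Tk) / (((k:ℝ)+1) * F) by
        field_simp]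
  gcongr
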